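/- Let 𝒜₀ be a semilattice of subsets of a set X, Φ₀ : 𝒜₀ → ℝ semi-additive, and Φ the unique strongly additive extension of Φ₀ to the ring 𝒜 generated by 𝒜₀; write Φ₀(b) = Σᵢ cᵢ Φ₀(Aᵢ) for a simple function b = Σᵢ cᵢ 1_{Aᵢ} with Aᵢ ∈ 𝒜₀ (this is well defined). Then: (i) Φ ≥ 0 on 𝒜 if and only if sup{Φ₀(b) : b an 𝒜₀-simple function with b ≤ 0} ≤ 0; (ii) Φ is bounded on 𝒜 if and only if sup{|Φ₀(b)| : b an 𝒜₀-simple function with |b| ≤ 1} < ∞; (iii) Φ is bounded and nonnegative on 𝒜 if and only if sup{Φ₀(b) : b an 𝒜₀-simple function with b ≤ 1} < ∞. -/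

import Mathlib

open Finset Set

/-- `ν(b) = (−1)^{1+|b|}` for a finite set `b` of natural numbers. -/
noncomputable def nu (b : Finset ℕ) : ℝ := (-1 : ℝ) ^ (1 + b.card)

/-- A `∩`-semilattice of sets: a nonempty family closed under finite intersections. -/
def IsCapSemilattice {X : Type*} (𝒜 : Set (Set X)) : Prop :=
  𝒜.Nonempty ∧ ∀ A ∈ 𝒜, ∀ B ∈ 𝒜, A ∩ B ∈ 𝒜

/-- A `∪`-semilattice of sets: a nonempty family closed under finite unions. -/
def IsCupSemilattice {X : Type*} (𝒜 : Set (Set X)) : Prop :=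
  𝒜.Nonempty ∧ ∀ A ∈ 𝒜, ∀ B ∈ 𝒜, A ∪ B ∈ 𝒜

/-- A lattice of sets: nonempty, closed under finite intersections and finite unions. -/
def IsSetLattice {X : Type*} (𝒜 : Set (Set X)) : Prop :=
  𝒜.Nonempty ∧ (∀ A ∈ 𝒜, ∀ B ∈ 𝒜, A ∩ B ∈ 𝒜) ∧ ∀ A ∈ 𝒜, ∀ B ∈ 𝒜, A ∪ B ∈ 𝒜

/-- A ring of sets: nonempty, closed under finite unions and set differences. -/
def IsSetRing0 {X : Type*} (𝒜 : Set (Set X)) : Prop :=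
  𝒜.Nonempty ∧ (∀ A ∈ 𝒜, ∀ B ∈ 𝒜, A ∪ B ∈ 𝒜) ∧ ∀ A ∈ 𝒜, ∀ B ∈ 𝒜, A \ B ∈ 𝒜

/-- An algebra of sets: a ring of sets containing the whole space. -/
def IsSetAlgebra0 {X : Type*} (𝒜 : Set (Set X)) : Prop :=
  IsSetRing0 𝒜 ∧ Set.univ ∈ 𝒜

/-- A set function is modular on `𝒜` if `Φ(A∪B) + Φ(A∩B) = Φ(A) + Φ(B)` for `A, B ∈ 𝒜`. -/
def Modular {X Y : Type*} [AddCommGroup Y] (𝒜 : Set (Set X)) (Φ : Set X → Y) : Prop :=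
  ∀ A ∈ 𝒜, ∀ B ∈ 𝒜, Φ (A ∪ B) + Φ (A ∩ B) = Φ A + Φ B

/-- Strongly additive: modular, and vanishing at `∅` whenever `∅` belongs to the family. -/
def StronglyAdditive {X Y : Type*} [AddCommGroup Y] (𝒜 : Set (Set X)) (Φ : Set X → Y) : Prop :=
  Modular 𝒜 Φ ∧ (∅ ∈ 𝒜 → Φ ∅ = 0)

/-- Semi-modularity on a `∩`-semilattice: whenever `A₁,…,A_N ∈ 𝒜` and `⋃ A_n ∈ 𝒜`,
`Φ(⋃_{n} A_n) = Σ_{∅≠b⊆{1,…,N}} ν(b) Φ(⋂_{n∈b} A_n)`. -/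
def CapSemiModular {X Y : Type*} [AddCommGroup Y] [Module ℝ Y]
    (𝒜 : Set (Set X)) (Φ : Set X → Y) : Prop :=
  ∀ N : ℕ, 0 < N → ∀ A : ℕ → Set X,
    (∀ n ∈ Finset.range N, A n ∈ 𝒜) → (⋃ n ∈ Finset.range N, A n) ∈ 𝒜 →
    Φ (⋃ n ∈ Finset.range N, A n) =
      ∑ b ∈ (Finset.range N).powerset.filter (· ≠ ∅), nu b • Φ (⋂ n ∈ b, A n)

/-- Semi-modularity on a `∪`-semilattice: whenever `A₁,…,A_N ∈ 𝒜` and `⋂ A_n ∈ 𝒜`,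
`Φ(⋂_{n} A_n) = Σ_{∅≠b⊆{1,…,N}} ν(b) Φ(⋃_{n∈b} A_n)`. -/
def CupSemiModular {X Y : Type*} [AddCommGroup Y] [Module ℝ Y]
    (𝒜 : Set (Set X)) (Φ : Set X → Y) : Prop :=
  ∀ N : ℕ, 0 < N → ∀ A : ℕ → Set X,
    (∀ n ∈ Finset.range N, A n ∈ 𝒜) → (⋂ n ∈ Finset.range N, A n) ∈ 𝒜 →
    Φ (⋂ n ∈ Finset.range N, A n) =
      ∑ b ∈ (Finset.range N).powerset.filter (· ≠ ∅), nu b • Φ (⋃ n ∈ b, A n)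

/-- A set function on a semilattice is semi-modular if it satisfies the appropriate
semi-modularity condition for the kind(s) of semilattice its domain is. -/
def SemiModular {X Y : Type*} [AddCommGroup Y] [Module ℝ Y]
    (𝒜 : Set (Set X)) (Φ : Set X → Y) : Prop :=
  (IsCapSemilattice 𝒜 → CapSemiModular 𝒜 Φ) ∧ (IsCupSemilattice 𝒜 → CupSemiModular 𝒜 Φ)

/-- Semi-additive: admits a semi-modular extension to `𝒜 ∪ {∅}` vanishing at `∅`. -/
def SemiAdditive {X Y : Type*} [AddCommGroup Y] [Module ℝ Y]
    (𝒜 : Set (Set X)) (Φ : Set X → Y) : Prop :=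
  ∃ Ψ : Set X → Y, (∀ A ∈ 𝒜, Ψ A = Φ A) ∧ Ψ ∅ = 0 ∧ SemiModular (insert ∅ 𝒜) Ψ

section Aux

section Ring
variable {X : Type*} {𝒜 : Set (Set X)} (h𝒜 : IsSetRing0 𝒜)
include h𝒜

lemma r_empty_mem : (∅ : Set X) ∈ 𝒜 := by
  obtain ⟨⟨A, hA⟩, _, hdiff⟩ := h𝒜
  simpa using hdiff A hA A hA

lemma r_inter_mem {A B : Set X} (hA : A ∈ 𝒜) (hB : B ∈ 𝒜) : A ∩ B ∈ 𝒜 := by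
  have : A ∩ B = A \ (A \ B) := by
    ext x; simp only [Set.mem_inter_iff, Set.mem_diff, not_and, not_not]; tauto
  rw [this]; exact h𝒜.2.2 _ hA _ (h𝒜.2.2 _ hA _ hB)

lemma r_biUnion_mem {ι : Type*} (s : Finset ι) (B : ι → Set X)
    (hB : ∀ i ∈ s, B i ∈ 𝒜) : (⋃ i ∈ s, B i) ∈ 𝒜 := by
  classical
  induction s using Finset.induction with
  | empty => simpa using r_empty_mem h𝒜
  | insert a s hni ih =>
    rw [Finset.set_biUnion_insert]
    exact h𝒜.2.1 _ (hB a (Finset.mem_insert_self a s)) _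
      (ih fun i hi => hB i (Finset.mem_insert_of_mem hi))

lemma r_inter_biInter_mem {ι : Type*} (s : Finset ι) (B : ι → Set X)
    (hB : ∀ i ∈ s, B i ∈ 𝒜) {C : Set X} (hC : C ∈ 𝒜) :
    (C ∩ ⋂ i ∈ s, B i) ∈ 𝒜 := by
  classical
  induction s using Finset.induction generalizing C with
  | empty => simpa using hC
  | insert a s hni ih =>
    rw [Finset.set_biInter_insert, ← Set.inter_assoc]
    have hC' : C ∩ B a ∈ 𝒜 := r_inter_mem h𝒜 hC (hB a (Finset.mem_insert_self a s))
    exact ih (fun i hi => hB i (Finset.mem_insert_of_mem hi)) hC'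

lemma r_biInter_mem {ι : Type*} (s : Finset ι) (hs : s.Nonempty) (B : ι → Set X)
    (hB : ∀ i ∈ s, B i ∈ 𝒜) : (⋂ i ∈ s, B i) ∈ 𝒜 := by
  classical
  obtain ⟨a, ha⟩ := hs
  have : (⋂ i ∈ s, B i) = B a ∩ ⋂ i ∈ s, B i := by
    apply (Set.inter_eq_self_of_subset_right ?_).symm
    exact Set.biInter_subset_of_mem ha
  rw [this]
  exact r_inter_biInter_mem h𝒜 s B hB (hB a ha)

variable {Φ : Set X → ℝ} (hΦ : StronglyAdditive 𝒜 Φ)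
include hΦ

lemma phi_empty : Φ ∅ = 0 := hΦ.2 (r_empty_mem h𝒜)

lemma phi_union_disjoint {A B : Set X} (hA : A ∈ 𝒜) (hB : B ∈ 𝒜)
    (h : A ∩ B = ∅) : Φ (A ∪ B) = Φ A + Φ B := by
  have := hΦ.1 A hA B hB
  rw [h, phi_empty h𝒜 hΦ] at this
  linarith

lemma phi_sum_disjoint {ι : Type*} (s : Finset ι) (B : ι → Set X)
    (hB : ∀ i ∈ s, B i ∈ 𝒜)
    (hdisj : ∀ i ∈ s, ∀ j ∈ s, i ≠ j → B i ∩ B j = ∅) :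
    Φ (⋃ i ∈ s, B i) = ∑ i ∈ s, Φ (B i) := by
  classical
  induction s using Finset.induction with
  | empty => simpa using phi_empty h𝒜 hΦ
  | insert a s hni ih =>
    rw [Finset.set_biUnion_insert, Finset.sum_insert hni]
    have hrest : (⋃ i ∈ s, B i) ∈ 𝒜 :=
      r_biUnion_mem h𝒜 s B fun i hi => hB i (Finset.mem_insert_of_mem hi)
    have hd : B a ∩ ⋃ i ∈ s, B i = ∅ := by
      ext x
      simp only [Set.mem_inter_iff, Set.mem_iUnion, Set.mem_empty_iff_false, iff_false]
      rintro ⟨hxa, i, hi, hxi⟩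
      have := hdisj a (Finset.mem_insert_self a s) i (Finset.mem_insert_of_mem hi)
        (by rintro rfl; exact hni hi)
      exact absurd (Set.mem_inter hxa hxi) (by rw [this]; exact id)
    rw [phi_union_disjoint h𝒜 hΦ (hB a (Finset.mem_insert_self a s)) hrest hd,
      ih (fun i hi => hB i (Finset.mem_insert_of_mem hi))
        (fun i hi j hj hij => hdisj i (Finset.mem_insert_of_mem hi) j (Finset.mem_insert_of_mem hj) hij)]

end Ring


section Atoms
open scoped Classical
variable {X : Type*}

/-- The atom of the family `A` (restricted to indices `< N`) determined by `S`. -/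
def atomOf (A : ℕ → Set X) (N : ℕ) (S : Finset ℕ) : Set X :=
  (⋂ n ∈ S, A n) \ (⋃ n ∈ Finset.range N \ S, A n)

lemma mem_atomOf {A : ℕ → Set X} {N : ℕ} {S : Finset ℕ} {x : X} :
    x ∈ atomOf A N S ↔ (∀ n ∈ S, x ∈ A n) ∧ ∀ n ∈ Finset.range N \ S, x ∉ A n := by
  simp [atomOf]

/-- For `x` in the atom of `S ⊆ range N`: `x ∈ A n ↔ n ∈ S` for each `n < N`. -/
lemma atomOf_mem_iff {A : ℕ → Set X} {N : ℕ} {S : Finset ℕ} (hS : S ⊆ Finset.range N)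
    {x : X} (hx : x ∈ atomOf A N S) {n : ℕ} (hn : n ∈ Finset.range N) :
    x ∈ A n ↔ n ∈ S := by
  rw [mem_atomOf] at hx
  constructor
  · intro hxA
    by_contra hns
    exact hx.2 n (Finset.mem_sdiff.2 ⟨hn, hns⟩) hxA
  · exact fun h => hx.1 n h

lemma atomOf_disjoint {A : ℕ → Set X} {N : ℕ} {S T : Finset ℕ}
    (hS : S ⊆ Finset.range N) (hT : T ⊆ Finset.range N) (hST : S ≠ T) :
    atomOf A N S ∩ atomOf A N T = ∅ := by
  ext x
  simp only [Set.mem_inter_iff, Set.mem_empty_iff_false, iff_false, not_and]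
  intro hxS hxT
  apply hST
  ext n
  by_cases hn : n ∈ Finset.range N
  · rw [← atomOf_mem_iff hS hxS hn, ← atomOf_mem_iff hT hxT hn]
  · constructor <;> intro h
    · exact absurd (hS h) hn
    · exact absurd (hT h) hn

/-- Index set of the atoms. -/
def atomIdx (N : ℕ) : Finset (Finset ℕ) :=
  (Finset.range N).powerset.filter (· ≠ ∅)

lemma trace_mem_atomIdx {A : ℕ → Set X} {N : ℕ} {x : X} {m : ℕ} (hm : m ∈ Finset.range N)
    (hx : x ∈ A m) :
    ((Finset.range N).filter (fun n => x ∈ A n)) ∈ atomIdx N ∧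
    x ∈ atomOf A N ((Finset.range N).filter (fun n => x ∈ A n)) ∧
    m ∈ (Finset.range N).filter (fun n => x ∈ A n) := by
  classical
  have hmS : m ∈ (Finset.range N).filter (fun n => x ∈ A n) := by
    simp [Finset.mem_filter, hm, hx]
  refine ⟨?_, ?_, hmS⟩
  · simp only [atomIdx, Finset.mem_filter, Finset.mem_powerset]
    exact ⟨Finset.filter_subset _ _, Finset.ne_empty_of_mem hmS⟩
  · rw [mem_atomOf]
    constructor
    · intro n hn; exact (Finset.mem_filter.1 hn).2
    · intro n hn
      rw [Finset.mem_sdiff] at hn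
      intro hxn
      exact hn.2 (Finset.mem_filter.2 ⟨hn.1, hxn⟩)

/-- Decomposition of `A m` into the atoms containing index `m`. -/
lemma set_eq_biUnion_atoms (A : ℕ → Set X) {N m : ℕ} (hm : m ∈ Finset.range N) :
    A m = ⋃ S ∈ (atomIdx N).filter (fun S => m ∈ S), atomOf A N S := by
  classical
  ext x
  simp only [Set.mem_iUnion, exists_prop, Finset.mem_filter]
  constructor
  · intro hx
    obtain ⟨h1, h2, h3⟩ := trace_mem_atomIdx hm hx
    exact ⟨_, ⟨h1, h3⟩, h2⟩
  · rintro ⟨S, ⟨_, hmS⟩, hxS⟩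
    exact (mem_atomOf.1 hxS).1 m hmS

end Atoms


section Key
open scoped Classical
variable {X : Type*} {𝒜 : Set (Set X)} (h𝒜 : IsSetRing0 𝒜)
  {Φ : Set X → ℝ} (hΦ : StronglyAdditive 𝒜 Φ)

include h𝒜 in
lemma atomOf_mem_ring {A : ℕ → Set X} {N : ℕ} (hA : ∀ n ∈ Finset.range N, A n ∈ 𝒜)
    {S : Finset ℕ} (hS : S ∈ atomIdx N) : atomOf A N S ∈ 𝒜 := by
  rw [atomIdx, Finset.mem_filter, Finset.mem_powerset] at hS
  refine h𝒜.2.2 _ ?_ _ ?_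
  · exact r_biInter_mem h𝒜 S (Finset.nonempty_of_ne_empty hS.2) A fun n hn => hA n (hS.1 hn)
  · exact r_biUnion_mem h𝒜 _ A fun n hn => hA n (Finset.mem_sdiff.1 hn).1

include h𝒜 hΦ

lemma phi_set_eq_sum_atoms {A : ℕ → Set X} {N : ℕ} (hA : ∀ n ∈ Finset.range N, A n ∈ 𝒜)
    {m : ℕ} (hm : m ∈ Finset.range N) :
    Φ (A m) = ∑ S ∈ (atomIdx N).filter (fun S => m ∈ S), Φ (atomOf A N S) := by
  rw [set_eq_biUnion_atoms A hm]
  apply phi_sum_disjoint h𝒜 hΦ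
  · intro S hS; exact atomOf_mem_ring h𝒜 hA (Finset.mem_filter.1 hS).1
  · intro S hS T hT hST
    have hS' := (Finset.mem_powerset.1 (Finset.mem_filter.1 (Finset.mem_filter.1 hS).1).1)
    have hT' := (Finset.mem_powerset.1 (Finset.mem_filter.1 (Finset.mem_filter.1 hT).1).1)
    exact atomOf_disjoint hS' hT' hST

/-- The key identity: `Σ cₙ Φ(Aₙ) = Σ_S (Σ_{n∈S} cₙ) Φ(atom S)`. -/
lemma key_identity {A : ℕ → Set X} {N : ℕ} (hA : ∀ n ∈ Finset.range N, A n ∈ 𝒜)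
    (c : ℕ → ℝ) :
    ∑ n ∈ Finset.range N, c n * Φ (A n) =
      ∑ S ∈ atomIdx N, (∑ n ∈ S, c n) * Φ (atomOf A N S) := by
  have step1 : ∀ n ∈ Finset.range N, c n * Φ (A n) =
      ∑ S ∈ atomIdx N, if n ∈ S then c n * Φ (atomOf A N S) else 0 := by
    intro n hn
    rw [phi_set_eq_sum_atoms h𝒜 hΦ hA hn, Finset.mul_sum, Finset.sum_filter]
  rw [Finset.sum_congr rfl step1, Finset.sum_comm]
  apply Finset.sum_congr rfl
  intro S hS
  have hSsub : S ⊆ Finset.range N :=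
    Finset.mem_powerset.1 (Finset.mem_filter.1 hS).1
  rw [Finset.sum_ite_mem, Finset.inter_eq_right.2 hSsub, ← Finset.sum_mul]

omit h𝒜 hΦ in
/-- Pointwise value of the simple function on an atom. -/
lemma simple_on_atom {A : ℕ → Set X} {N : ℕ} (c : ℕ → ℝ) {S : Finset ℕ}
    (hS : S ∈ atomIdx N) {x : X} (hx : x ∈ atomOf A N S) :
    ∑ n ∈ Finset.range N, c n * (A n).indicator (fun _ => (1 : ℝ)) x = ∑ n ∈ S, c n := by
  have hSsub : S ⊆ Finset.range N :=
    Finset.mem_powerset.1 (Finset.mem_filter.1 hS).1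
  have : ∀ n ∈ Finset.range N,
      c n * (A n).indicator (fun _ => (1 : ℝ)) x = if n ∈ S then c n else 0 := by
    intro n hn
    rw [Set.indicator_apply]
    by_cases h : n ∈ S
    · simp [h, (atomOf_mem_iff hSsub hx hn).2 h]
    · have : x ∉ A n := fun hxA => h ((atomOf_mem_iff hSsub hx hn).1 hxA)
      simp [h, this]
  rw [Finset.sum_congr rfl this, Finset.sum_ite_mem, Finset.inter_eq_right.2 hSsub]

include hΦ in
/-- `Φ` of the union of all atoms is the sum, and the union is in the ring. -/
lemma phi_total_atoms {A : ℕ → Set X} {N : ℕ} (hA : ∀ n ∈ Finset.range N, A n ∈ 𝒜) :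
    (⋃ S ∈ atomIdx N, atomOf A N S) ∈ 𝒜 ∧
    Φ (⋃ S ∈ atomIdx N, atomOf A N S) = ∑ S ∈ atomIdx N, Φ (atomOf A N S) := by
  constructor
  · exact r_biUnion_mem h𝒜 _ _ fun S hS => atomOf_mem_ring h𝒜 hA hS
  · apply phi_sum_disjoint h𝒜 hΦ
    · intro S hS; exact atomOf_mem_ring h𝒜 hA hS
    · intro S hS T hT hST
      exact atomOf_disjoint (Finset.mem_powerset.1 (Finset.mem_filter.1 hS).1)
        (Finset.mem_powerset.1 (Finset.mem_filter.1 hT).1) hST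

end Key


section Span
variable {X : Type*}

/-- Indicator functions of sets in `𝒜₀`. -/
def indSet (𝒜₀ : Set (Set X)) : Set (X → ℝ) :=
  {f | ∃ B ∈ 𝒜₀, f = B.indicator (fun _ => (1 : ℝ))}

lemma indicator_mul_indicator (B C : Set X) :
    B.indicator (fun _ => (1 : ℝ)) * C.indicator (fun _ => (1 : ℝ)) =
      (B ∩ C).indicator (fun _ => (1 : ℝ)) := by
  funext x
  by_cases hB : x ∈ B <;> by_cases hC : x ∈ C <;>
    simp [Set.indicator_apply, hB, hC, Set.mem_inter_iff]

lemma inter_indicator_of_cup (B C : Set X) :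
    (B ∩ C).indicator (fun _ => (1 : ℝ)) =
      B.indicator (fun _ => (1 : ℝ)) + C.indicator (fun _ => (1 : ℝ))
        - (B ∪ C).indicator (fun _ => (1 : ℝ)) := by
  funext x
  by_cases hB : x ∈ B <;> by_cases hC : x ∈ C <;>
    simp [Set.indicator_apply, hB, hC, Set.mem_inter_iff, Set.mem_union] <;> ring

lemma span_mul_closed {𝒜₀ : Set (Set X)}
    (hsl : IsCapSemilattice 𝒜₀ ∨ IsCupSemilattice 𝒜₀) :
    ∀ f ∈ Submodule.span ℝ (indSet 𝒜₀), ∀ g ∈ Submodule.span ℝ (indSet 𝒜₀),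
      f * g ∈ Submodule.span ℝ (indSet 𝒜₀) := by
  have base : ∀ f ∈ indSet 𝒜₀, ∀ g ∈ indSet 𝒜₀,
      f * g ∈ Submodule.span ℝ (indSet 𝒜₀) := by
    rintro f ⟨B, hB, rfl⟩ g ⟨C, hC, rfl⟩
    rw [indicator_mul_indicator]
    rcases hsl with hcap | hcup
    · exact Submodule.subset_span ⟨B ∩ C, hcap.2 B hB C hC, rfl⟩
    · rw [inter_indicator_of_cup]
      apply Submodule.sub_mem
      · exact Submodule.add_mem _ (Submodule.subset_span ⟨B, hB, rfl⟩)
          (Submodule.subset_span ⟨C, hC, rfl⟩)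
      · exact Submodule.subset_span ⟨B ∪ C, hcup.2 B hB C hC, rfl⟩
  intro f hf
  induction hf using Submodule.span_induction with
  | mem f hfm =>
    intro g hg
    induction hg using Submodule.span_induction with
    | mem g hgm => exact base _ hfm _ hgm
    | zero => simpa using Submodule.zero_mem _
    | add g₁ g₂ _ _ ih1 ih2 => rw [mul_add]; exact Submodule.add_mem _ ih1 ih2
    | smul a g _ ih => rw [mul_smul_comm]; exact Submodule.smul_mem _ a ih
  | zero => intro g hg; simpa using Submodule.zero_mem _
  | add f₁ f₂ _ _ ih1 ih2 =>
    intro g hg; rw [add_mul]; exact Submodule.add_mem _ (ih1 g hg) (ih2 g hg)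
  | smul a f _ ih =>
    intro g hg; rw [smul_mul_assoc]; exact Submodule.smul_mem _ a (ih g hg)

/-- Every set in the generated ring has an indicator in the span. -/
lemma ring_indicator_mem_span {𝒜₀ 𝒜 : Set (Set X)}
    (hsl : IsCapSemilattice 𝒜₀ ∨ IsCupSemilattice 𝒜₀)
    (hring : IsSetRing0 𝒜 ∧ 𝒜₀ ⊆ 𝒜 ∧
      ∀ R : Set (Set X), IsSetRing0 R → 𝒜₀ ⊆ R → 𝒜 ⊆ R) :
    ∀ A ∈ 𝒜, A.indicator (fun _ => (1 : ℝ)) ∈ Submodule.span ℝ (indSet 𝒜₀) := by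
  have h0ne : 𝒜₀.Nonempty := by rcases hsl with h | h <;> exact h.1
  set R : Set (Set X) := {A | A.indicator (fun _ => (1 : ℝ)) ∈ Submodule.span ℝ (indSet 𝒜₀)}
    with hR
  have hsub : 𝒜₀ ⊆ R := fun B hB => Submodule.subset_span ⟨B, hB, rfl⟩
  have hRring : IsSetRing0 R := by
    refine ⟨h0ne.mono hsub, ?_, ?_⟩
    · intro A hA B hB
      have : (A ∪ B).indicator (fun _ => (1 : ℝ)) =
          A.indicator (fun _ => (1 : ℝ)) + B.indicator (fun _ => (1 : ℝ))
            - A.indicator (fun _ => (1 : ℝ)) * B.indicator (fun _ => (1 : ℝ)) := by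
        funext x
        by_cases h1 : x ∈ A <;> by_cases h2 : x ∈ B <;>
          simp [Set.indicator_apply, h1, h2, Set.mem_union] <;> ring
      show _ ∈ Submodule.span ℝ (indSet 𝒜₀)
      rw [this]
      exact Submodule.sub_mem _ (Submodule.add_mem _ hA hB)
        (span_mul_closed hsl _ hA _ hB)
    · intro A hA B hB
      have : (A \ B).indicator (fun _ => (1 : ℝ)) =
          A.indicator (fun _ => (1 : ℝ))
            - A.indicator (fun _ => (1 : ℝ)) * B.indicator (fun _ => (1 : ℝ)) := by
        funext x
        by_cases h1 : x ∈ A <;> by_cases h2 : x ∈ B <;>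
          simp [Set.indicator_apply, h1, h2, Set.mem_diff] <;> ring
      show _ ∈ Submodule.span ℝ (indSet 𝒜₀)
      rw [this]
      exact Submodule.sub_mem _ hA (span_mul_closed hsl _ hA _ hB)
  exact fun A hA => hring.2.2 R hRring hsub hA

/-- Every set in the generated ring has a finite `ℕ`-indexed representation. -/
lemma ring_has_rep {𝒜₀ 𝒜 : Set (Set X)}
    (hsl : IsCapSemilattice 𝒜₀ ∨ IsCupSemilattice 𝒜₀)
    (hring : IsSetRing0 𝒜 ∧ 𝒜₀ ⊆ 𝒜 ∧
      ∀ R : Set (Set X), IsSetRing0 R → 𝒜₀ ⊆ R → 𝒜 ⊆ R)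
    {A : Set X} (hA : A ∈ 𝒜) :
    ∃ (N : ℕ) (c : ℕ → ℝ) (B : ℕ → Set X),
      (∀ n ∈ Finset.range N, B n ∈ 𝒜₀) ∧
      ∀ x, A.indicator (fun _ => (1 : ℝ)) x =
        ∑ n ∈ Finset.range N, c n * (B n).indicator (fun _ => (1 : ℝ)) x := by
  classical
  have h := ring_indicator_mem_span hsl hring A hA
  rw [Submodule.mem_span_set'] at h
  obtain ⟨N, f, g, hsum⟩ := h
  have hg : ∀ i : Fin N, ∃ B ∈ 𝒜₀, (g i : X → ℝ) = B.indicator (fun _ => (1 : ℝ)) :=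
    fun i => (g i).2
  choose Bf hBf hgBf using hg
  refine ⟨N, fun n => if h : n < N then f ⟨n, h⟩ else 0,
    fun n => if h : n < N then Bf ⟨n, h⟩ else ∅, ?_, ?_⟩
  · intro n hn
    rw [Finset.mem_range] at hn
    simp only [dif_pos hn]
    exact hBf _
  · intro x
    have := congrFun hsum x
    simp only [Finset.sum_apply, Pi.smul_apply, smul_eq_mul] at this
    rw [← this, Finset.sum_range]
    apply Finset.sum_congr rfl
    intro i _
    simp only [Fin.is_lt, dif_pos]
    rw [hgBf i]

end Span


section Rep
variable {X : Type*} {𝒜 : Set (Set X)} (h𝒜 : IsSetRing0 𝒜)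
  {Φ : Set X → ℝ} (hΦ : StronglyAdditive 𝒜 Φ)
include h𝒜 hΦ

lemma rep_zero {N : ℕ} {c : ℕ → ℝ} {A : ℕ → Set X}
    (hA : ∀ n ∈ Finset.range N, A n ∈ 𝒜)
    (h0 : ∀ x, ∑ n ∈ Finset.range N, c n * (A n).indicator (fun _ => (1 : ℝ)) x = 0) :
    ∑ n ∈ Finset.range N, c n * Φ (A n) = 0 := by
  rw [key_identity h𝒜 hΦ hA c]
  apply Finset.sum_eq_zero
  intro S hS
  by_cases he : atomOf A N S = ∅
  · rw [he, phi_empty h𝒜 hΦ, mul_zero]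
  · obtain ⟨x, hx⟩ := Set.nonempty_iff_ne_empty.2 he
    have h1 := simple_on_atom c hS hx
    rw [← h1, h0 x, zero_mul]

lemma phi_rep {𝒜₀ : Set (Set X)} (h₀sub : 𝒜₀ ⊆ 𝒜) {A : Set X} (hA : A ∈ 𝒜)
    {N : ℕ} {c : ℕ → ℝ} {B : ℕ → Set X}
    (hB : ∀ n ∈ Finset.range N, B n ∈ 𝒜₀)
    (hrep : ∀ x, A.indicator (fun _ => (1 : ℝ)) x =
      ∑ n ∈ Finset.range N, c n * (B n).indicator (fun _ => (1 : ℝ)) x) :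
    Φ A = ∑ n ∈ Finset.range N, c n * Φ (B n) := by
  classical
  set c' : ℕ → ℝ := fun n => if n = N then -1 else c n with hc'
  set B' : ℕ → Set X := fun n => if n = N then A else B n with hB'
  have hmemB' : ∀ n ∈ Finset.range (N + 1), B' n ∈ 𝒜 := by
    intro n hn
    rw [Finset.mem_range] at hn
    by_cases h : n = N
    · simp only [hB', if_pos h]; exact hA
    · simp only [hB', if_neg h]
      exact h₀sub (hB n (Finset.mem_range.2 (by omega)))
  have hsum_eqF : ∀ (f : ℕ → Set X → ℝ), ∑ n ∈ Finset.range N, c' n * f n (B' n) =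
      ∑ n ∈ Finset.range N, c n * f n (B n) := by
    intro f
    apply Finset.sum_congr rfl
    intro n hn
    rw [Finset.mem_range] at hn
    have h : n ≠ N := by omega
    simp only [hc', hB', if_neg h]
  have h0 : ∀ x, ∑ n ∈ Finset.range (N + 1),
      c' n * (B' n).indicator (fun _ => (1 : ℝ)) x = 0 := by
    intro x
    rw [Finset.sum_range_succ]
    have := hsum_eqF (fun n C => C.indicator (fun _ => (1 : ℝ)) x)
    rw [this, ← hrep x]
    simp [hc', hB']
  have hz := rep_zero h𝒜 hΦ hmemB' h0
  rw [Finset.sum_range_succ] at hz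
  have h2 := hsum_eqF (fun _ C => Φ C)
  rw [h2] at hz
  simp only [hc', hB', if_pos rfl] at hz
  linarith

end Rep


lemma ind_nonneg {X : Type*} (A : Set X) (x : X) :
    0 ≤ A.indicator (fun _ => (1 : ℝ)) x := by
  by_cases h : x ∈ A <;> simp [Set.indicator_apply, h]

lemma ind_le_one {X : Type*} (A : Set X) (x : X) :
    A.indicator (fun _ => (1 : ℝ)) x ≤ 1 := by
  by_cases h : x ∈ A <;> simp [Set.indicator_apply, h]

theorem stmt11' {X : Type*} (𝒜₀ 𝒜 : Set (Set X))
    (hsl : IsCapSemilattice 𝒜₀ ∨ IsCupSemilattice 𝒜₀)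
    (Φ₀ Φ : Set X → ℝ)
    (hring : IsSetRing0 𝒜 ∧ 𝒜₀ ⊆ 𝒜 ∧
      ∀ R : Set (Set X), IsSetRing0 R → 𝒜₀ ⊆ R → 𝒜 ⊆ R)
    (hΦ : StronglyAdditive 𝒜 Φ)
    (hext : ∀ A ∈ 𝒜₀, Φ A = Φ₀ A) :
    ((∀ A ∈ 𝒜, 0 ≤ Φ A) ↔
      ∀ (N : ℕ) (c : ℕ → ℝ) (A : ℕ → Set X),
        (∀ n ∈ Finset.range N, A n ∈ 𝒜₀) →
        (∀ x : X, ∑ n ∈ Finset.range N, c n * (A n).indicator (fun _ => (1 : ℝ)) x ≤ 0) →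
        ∑ n ∈ Finset.range N, c n * Φ₀ (A n) ≤ 0) ∧
    ((∃ M : ℝ, ∀ A ∈ 𝒜, |Φ A| ≤ M) ↔
      ∃ M : ℝ, ∀ (N : ℕ) (c : ℕ → ℝ) (A : ℕ → Set X),
        (∀ n ∈ Finset.range N, A n ∈ 𝒜₀) →
        (∀ x : X, |∑ n ∈ Finset.range N, c n * (A n).indicator (fun _ => (1 : ℝ)) x| ≤ 1) →
        |∑ n ∈ Finset.range N, c n * Φ₀ (A n)| ≤ M) ∧
    (((∀ A ∈ 𝒜, 0 ≤ Φ A) ∧ ∃ M : ℝ, ∀ A ∈ 𝒜, |Φ A| ≤ M) ↔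
      ∃ M : ℝ, ∀ (N : ℕ) (c : ℕ → ℝ) (A : ℕ → Set X),
        (∀ n ∈ Finset.range N, A n ∈ 𝒜₀) →
        (∀ x : X, ∑ n ∈ Finset.range N, c n * (A n).indicator (fun _ => (1 : ℝ)) x ≤ 1) →
        ∑ n ∈ Finset.range N, c n * Φ₀ (A n) ≤ M) := by
  classical
  obtain ⟨h𝒜, hsub, hmin⟩ := hring
  -- converting sums over Φ₀ to sums over Φ
  have hconv : ∀ (N : ℕ) (c : ℕ → ℝ) (A : ℕ → Set X),
      (∀ n ∈ Finset.range N, A n ∈ 𝒜₀) →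
      ∑ n ∈ Finset.range N, c n * Φ₀ (A n) = ∑ n ∈ Finset.range N, c n * Φ (A n) := by
    intro N c A hA
    apply Finset.sum_congr rfl
    intro n hn
    rw [hext (A n) (hA n hn)]
  refine ⟨?_, ?_, ?_⟩
  · -- (i)
    constructor
    · intro hpos N c A hA hle
      have hA' : ∀ n ∈ Finset.range N, A n ∈ 𝒜 := fun n hn => hsub (hA n hn)
      rw [hconv N c A hA, key_identity h𝒜 hΦ hA' c]
      apply Finset.sum_nonpos
      intro S hS
      by_cases he : atomOf A N S = ∅
      · rw [he, phi_empty h𝒜 hΦ, mul_zero]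
      · obtain ⟨x, hx⟩ := Set.nonempty_iff_ne_empty.2 he
        have hval := simple_on_atom c hS hx
        have hw : ∑ n ∈ S, c n ≤ 0 := by rw [← hval]; exact hle x
        exact mul_nonpos_of_nonpos_of_nonneg hw
          (hpos _ (atomOf_mem_ring h𝒜 hA' hS))
    · intro h A hA
      obtain ⟨N, c, B, hB, hrep⟩ := ring_has_rep hsl ⟨h𝒜, hsub, hmin⟩ hA
      have hΦA : Φ A = ∑ n ∈ Finset.range N, c n * Φ (B n) :=
        phi_rep h𝒜 hΦ hsub hA hB hrep
      have hle : ∀ x : X, ∑ n ∈ Finset.range N,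
          (-c n) * (B n).indicator (fun _ => (1 : ℝ)) x ≤ 0 := by
        intro x
        have : ∑ n ∈ Finset.range N, (-c n) * (B n).indicator (fun _ => (1 : ℝ)) x =
            -(A.indicator (fun _ => (1 : ℝ)) x) := by
          rw [hrep x, ← Finset.sum_neg_distrib]
          apply Finset.sum_congr rfl; intro n _; ring
        rw [this]
        simpa using ind_nonneg A x
      have := h N (fun n => -c n) B hB hle
      rw [hconv N _ B hB] at this
      have : -∑ n ∈ Finset.range N, c n * Φ (B n) ≤ 0 := by
        rw [← Finset.sum_neg_distrib]
        convert this using 2 with n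
        ring
      linarith [hΦA ▸ this]
  · -- (ii)
    constructor
    · rintro ⟨M, hM⟩
      refine ⟨2 * M, ?_⟩
      intro N c A hA hle
      have hA' : ∀ n ∈ Finset.range N, A n ∈ 𝒜 := fun n hn => hsub (hA n hn)
      rw [hconv N c A hA, key_identity h𝒜 hΦ hA' c]
      calc |∑ S ∈ atomIdx N, (∑ n ∈ S, c n) * Φ (atomOf A N S)|
          ≤ ∑ S ∈ atomIdx N, |(∑ n ∈ S, c n) * Φ (atomOf A N S)| :=
            Finset.abs_sum_le_sum_abs _ _
        _ ≤ ∑ S ∈ atomIdx N, |Φ (atomOf A N S)| := by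
            apply Finset.sum_le_sum
            intro S hS
            by_cases he : atomOf A N S = ∅
            · rw [he, phi_empty h𝒜 hΦ]; simp
            · obtain ⟨x, hx⟩ := Set.nonempty_iff_ne_empty.2 he
              have hval := simple_on_atom c hS hx
              have hw : |∑ n ∈ S, c n| ≤ 1 := by rw [← hval]; exact hle x
              rw [abs_mul]
              exact mul_le_of_le_one_left (abs_nonneg _) hw
        _ ≤ 2 * M := by
            set P := (atomIdx N).filter (fun S => 0 ≤ Φ (atomOf A N S)) with hP
            have hsplit := Finset.sum_filter_add_sum_filter_not (atomIdx N)
              (fun S => 0 ≤ Φ (atomOf A N S)) (fun S => |Φ (atomOf A N S)|)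
            rw [← hsplit]
            have hdisjU : ∀ (Q : Finset (Finset ℕ)), Q ⊆ atomIdx N →
                Φ (⋃ S ∈ Q, atomOf A N S) = ∑ S ∈ Q, Φ (atomOf A N S) ∧
                (⋃ S ∈ Q, atomOf A N S) ∈ 𝒜 := by
              intro Q hQ
              constructor
              · apply phi_sum_disjoint h𝒜 hΦ
                · intro S hS; exact atomOf_mem_ring h𝒜 hA' (hQ hS)
                · intro S hS T hT hST
                  exact atomOf_disjoint
                    (Finset.mem_powerset.1 (Finset.mem_filter.1 (hQ hS)).1)
                    (Finset.mem_powerset.1 (Finset.mem_filter.1 (hQ hT)).1) hST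
              · exact r_biUnion_mem h𝒜 _ _ fun S hS => atomOf_mem_ring h𝒜 hA' (hQ hS)
            have h1 : ∑ S ∈ P, |Φ (atomOf A N S)| ≤ M := by
              have heq : ∑ S ∈ P, |Φ (atomOf A N S)| = ∑ S ∈ P, Φ (atomOf A N S) := by
                apply Finset.sum_congr rfl
                intro S hS
                exact abs_of_nonneg (Finset.mem_filter.1 hS).2
              obtain ⟨hsum, hmem⟩ := hdisjU P (Finset.filter_subset _ _)
              rw [heq, ← hsum]
              exact (abs_le.1 (hM _ hmem)).2
            have h2 : ∑ S ∈ (atomIdx N).filter (fun S => ¬ 0 ≤ Φ (atomOf A N S)),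
                |Φ (atomOf A N S)| ≤ M := by
              set Q := (atomIdx N).filter (fun S => ¬ 0 ≤ Φ (atomOf A N S)) with hQdef
              have heq : ∑ S ∈ Q, |Φ (atomOf A N S)| = -∑ S ∈ Q, Φ (atomOf A N S) := by
                rw [← Finset.sum_neg_distrib]
                apply Finset.sum_congr rfl
                intro S hS
                exact abs_of_neg (lt_of_not_ge (Finset.mem_filter.1 hS).2)
              obtain ⟨hsum, hmem⟩ := hdisjU Q (Finset.filter_subset _ _)
              rw [heq, ← hsum]
              have := (abs_le.1 (hM _ hmem)).1
              linarith
            linarith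
    · rintro ⟨M, h⟩
      refine ⟨M, ?_⟩
      intro A hA
      obtain ⟨N, c, B, hB, hrep⟩ := ring_has_rep hsl ⟨h𝒜, hsub, hmin⟩ hA
      have hΦA : Φ A = ∑ n ∈ Finset.range N, c n * Φ (B n) :=
        phi_rep h𝒜 hΦ hsub hA hB hrep
      have hle : ∀ x : X, |∑ n ∈ Finset.range N,
          c n * (B n).indicator (fun _ => (1 : ℝ)) x| ≤ 1 := by
        intro x
        rw [← hrep x]
        rw [abs_of_nonneg (ind_nonneg A x)]
        exact ind_le_one A x
      have := h N c B hB hle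
      rw [hconv N c B hB] at this
      rw [hΦA]
      exact this
  · -- (iii)
    constructor
    · rintro ⟨hpos, M, hM⟩
      refine ⟨M, ?_⟩
      intro N c A hA hle
      have hA' : ∀ n ∈ Finset.range N, A n ∈ 𝒜 := fun n hn => hsub (hA n hn)
      rw [hconv N c A hA, key_identity h𝒜 hΦ hA' c]
      obtain ⟨hUmem, hUsum⟩ := phi_total_atoms h𝒜 hΦ hA'
      calc ∑ S ∈ atomIdx N, (∑ n ∈ S, c n) * Φ (atomOf A N S)
          ≤ ∑ S ∈ atomIdx N, Φ (atomOf A N S) := by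
            apply Finset.sum_le_sum
            intro S hS
            by_cases he : atomOf A N S = ∅
            · rw [he, phi_empty h𝒜 hΦ, mul_zero]
            · obtain ⟨x, hx⟩ := Set.nonempty_iff_ne_empty.2 he
              have hval := simple_on_atom c hS hx
              have hw : ∑ n ∈ S, c n ≤ 1 := by rw [← hval]; exact hle x
              exact mul_le_of_le_one_left
                (hpos _ (atomOf_mem_ring h𝒜 hA' hS)) hw
        _ = Φ (⋃ S ∈ atomIdx N, atomOf A N S) := hUsum.symm
        _ ≤ M := (abs_le.1 (hM _ hUmem)).2
    · rintro ⟨M, h⟩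
      have hM0 : 0 ≤ M := by
        have := h 0 (fun _ => 0) (fun _ => ∅) (by simp) (by simp)
        simpa using this
      have hpos : ∀ A ∈ 𝒜, 0 ≤ Φ A := by
        intro A hA
        obtain ⟨N, c, B, hB, hrep⟩ := ring_has_rep hsl ⟨h𝒜, hsub, hmin⟩ hA
        have hΦA : Φ A = ∑ n ∈ Finset.range N, c n * Φ (B n) :=
          phi_rep h𝒜 hΦ hsub hA hB hrep
        by_contra hneg
        push_neg at hneg
        set K : ℝ := (M + 1) / (-Φ A) with hK
        have hKpos : 0 < K := div_pos (by linarith) (by linarith)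
        have hle : ∀ x : X, ∑ n ∈ Finset.range N,
            (-K * c n) * (B n).indicator (fun _ => (1 : ℝ)) x ≤ 1 := by
          intro x
          have heq : ∑ n ∈ Finset.range N,
              (-K * c n) * (B n).indicator (fun _ => (1 : ℝ)) x =
              -K * (A.indicator (fun _ => (1 : ℝ)) x) := by
            rw [hrep x, Finset.mul_sum]
            apply Finset.sum_congr rfl; intro n _; ring
          rw [heq]
          have := ind_nonneg A x
          nlinarith
        have hh := h N (fun n => -K * c n) B hB hle
        rw [hconv N _ B hB] at hh
        have heq2 : ∑ n ∈ Finset.range N, (-K * c n) * Φ (B n) =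
            -K * ∑ n ∈ Finset.range N, c n * Φ (B n) := by
          rw [Finset.mul_sum]
          apply Finset.sum_congr rfl; intro n _; ring
        rw [heq2, ← hΦA] at hh
        have hne : (-Φ A) ≠ 0 := by linarith
        have : -K * Φ A = M + 1 := by
          have h3 : -K * Φ A = K * (-Φ A) := by ring
          rw [h3, hK, div_mul_cancel₀ _ hne]
        linarith
      refine ⟨hpos, M, ?_⟩
      intro A hA
      obtain ⟨N, c, B, hB, hrep⟩ := ring_has_rep hsl ⟨h𝒜, hsub, hmin⟩ hA
      have hΦA : Φ A = ∑ n ∈ Finset.range N, c n * Φ (B n) :=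
        phi_rep h𝒜 hΦ hsub hA hB hrep
      have hle : ∀ x : X, ∑ n ∈ Finset.range N,
          c n * (B n).indicator (fun _ => (1 : ℝ)) x ≤ 1 := by
        intro x
        rw [← hrep x]
        exact ind_le_one A x
      have hh := h N c B hB hle
      rw [hconv N c B hB] at hh
      rw [abs_of_nonneg (hpos A hA), hΦA]
      exact hh


end Aux

/-- Positivity and boundedness of the strongly additive extension `Φ` of a
semi-additive real-valued `Φ₀`, characterized through the values of `Φ₀` on `𝒜₀`-simple
functions (`Φ₀(Σ cᵢ 1_{Aᵢ}) = Σ cᵢ Φ₀(Aᵢ)`). -/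
theorem stmt11 {X : Type*} (𝒜₀ 𝒜 : Set (Set X))
    (hsl : IsCapSemilattice 𝒜₀ ∨ IsCupSemilattice 𝒜₀)
    (Φ₀ Φ : Set X → ℝ)
    (hsa : SemiAdditive 𝒜₀ Φ₀)
    (hring : IsSetRing0 𝒜 ∧ 𝒜₀ ⊆ 𝒜 ∧
      ∀ R : Set (Set X), IsSetRing0 R → 𝒜₀ ⊆ R → 𝒜 ⊆ R)
    (hΦ : StronglyAdditive 𝒜 Φ)
    (hext : ∀ A ∈ 𝒜₀, Φ A = Φ₀ A) :
    ((∀ A ∈ 𝒜, 0 ≤ Φ A) ↔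
      ∀ (N : ℕ) (c : ℕ → ℝ) (A : ℕ → Set X),
        (∀ n ∈ Finset.range N, A n ∈ 𝒜₀) →
        (∀ x : X, ∑ n ∈ Finset.range N, c n * (A n).indicator (fun _ => (1 : ℝ)) x ≤ 0) →
        ∑ n ∈ Finset.range N, c n * Φ₀ (A n) ≤ 0) ∧
    ((∃ M : ℝ, ∀ A ∈ 𝒜, |Φ A| ≤ M) ↔
      ∃ M : ℝ, ∀ (N : ℕ) (c : ℕ → ℝ) (A : ℕ → Set X),
        (∀ n ∈ Finset.range N, A n ∈ 𝒜₀) →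
        (∀ x : X, |∑ n ∈ Finset.range N, c n * (A n).indicator (fun _ => (1 : ℝ)) x| ≤ 1) →
        |∑ n ∈ Finset.range N, c n * Φ₀ (A n)| ≤ M) ∧
    (((∀ A ∈ 𝒜, 0 ≤ Φ A) ∧ ∃ M : ℝ, ∀ A ∈ 𝒜, |Φ A| ≤ M) ↔
      ∃ M : ℝ, ∀ (N : ℕ) (c : ℕ → ℝ) (A : ℕ → Set X),
        (∀ n ∈ Finset.range N, A n ∈ 𝒜₀) →
        (∀ x : X, ∑ n ∈ Finset.range N, c n * (A n).indicator (fun _ => (1 : ℝ)) x ≤ 1) →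
        ∑ n ∈ Finset.range N, c n * Φ₀ (A n) ≤ M) := stmt11' 𝒜₀ 𝒜 hsl Φ₀ Φ hring hΦ hext
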